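/- If a matching μ produced as the outcome of some stated preference profile P' under the immediate acceptance mechanism with minority reserves (IAM-R) is not R-stable with respect to the students' true preferences, then P' is not a Nash equilibrium of the preference revelation game: the student s in some true-preference blocking pair (s,c) can profitably deviate by reporting a preference listing c first. -/

import Mathlib

open Finset

/-- A school choice market with affirmative actions: students `α`, schools `β`.
`minority s` says whether student `s` is a minority student; `prio c` is the ranking
of students by school `c` (lower number = higher priority); `cap c` is the capacity
`q_c`; `quota c` is the majority quota `q^M_c` (the corresponding minority reserve is
`r^m_c = q_c - q^M_c`). -/
structure Market (α β : Type*) where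
  minority : α → Bool
  prio : β → α → ℕ
  cap : β → ℕ
  quota : β → ℕ

namespace Market

noncomputable section
open scoped Classical

variable {α β : Type*} [Fintype α] [DecidableEq α] [Fintype β] [DecidableEq β]

/-- The minority reserve corresponding to the majority quota: `r^m_c = q_c - q^M_c`. -/
def reserve (M : Market α β) (c : β) : ℕ := M.cap c - M.quota c

/-- Number of students assigned to school `c` under assignment `μ`. -/
def assignedCard (μ : α → Option β) (c : β) : ℕ :=
  (univ.filter fun s => μ s = some c).card

/-- Number of majority students assigned to school `c`. -/
def majCard (M : Market α β) (μ : α → Option β) (c : β) : ℕ :=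
  (univ.filter fun s => μ s = some c ∧ M.minority s = false).card

/-- Number of minority students assigned to school `c`. -/
def minCard (M : Market α β) (μ : α → Option β) (c : β) : ℕ :=
  (univ.filter fun s => μ s = some c ∧ M.minority s = true).card

/-- One applicant is considered: accepted if capacity remains and (for a majority
student) the majority quota is not yet exhausted. -/
def acceptFold (isMin : α → Bool) (st : List α × ℕ × ℕ) (a : α) : List α × ℕ × ℕ :=
  match st with
  | (acc, cLeft, qLeft) =>
    if cLeft = 0 then (acc, cLeft, qLeft)
    else if isMin a then (a :: acc, cLeft - 1, qLeft)
    else if 0 < qLeft then (a :: acc, cLeft - 1, qLeft - 1)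
    else (acc, cLeft, qLeft)

/-- The set of applicants a school permanently accepts in one round of the immediate
acceptance algorithm: first minority applicants up to the remaining minority reserve in
priority order, then remaining applicants in priority order up to remaining capacity,
never exceeding the remaining majority quota for majority students. -/
def acceptList (prio : α → ℕ) (isMin : α → Bool) (apps : List α)
    (capLeft quotaLeft resLeft : ℕ) : List α :=
  let sorted := apps.mergeSort (fun a b => prio a ≤ prio b)
  let resAcc := (sorted.filter fun a => isMin a).take resLeft
  let rest := sorted.filter fun a => ¬ a ∈ resAcc
  resAcc ++ (rest.foldl (acceptFold isMin) ([], capLeft - resAcc.length, quotaLeft)).1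

/-- State of the immediate acceptance algorithm: current (permanent) assignment and the
position of each student in her reported preference list. -/
structure IAMState (α β : Type*) where
  assign : α → Option β
  pos : α → ℕ

/-- One round of the immediate acceptance mechanism with affirmative actions.
If `useReserve = false` this is the majority-quota version (IAM-Q, `r^m = 0`);
if `useReserve = true` this is the minority-reserve version (IAM-R, `q^M = q`). -/
def iamRound (M : Market α β) (rep : α → List β) (useReserve : Bool)
    (st : IAMState α β) : IAMState α β :=
  let capLeft : β → ℕ := fun c => M.cap c - assignedCard st.assign c
  let quotaLeft : β → ℕ := fun c =>
    if useReserve then capLeft c else M.quota c - majCard M st.assign c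
  let resLeft : β → ℕ := fun c =>
    if useReserve then M.reserve c - minCard M st.assign c else 0
  let applies : α → Option β := fun s =>
    if st.assign s = none then (rep s)[st.pos s]? else none
  let accepted : β → List α := fun c =>
    acceptList (M.prio c) M.minority
      ((univ.filter fun s => applies s = some c).toList) (capLeft c) (quotaLeft c)
      (resLeft c)
  { assign := fun s =>
      match st.assign s with
      | some c => some c
      | none =>
        match applies s with
        | some c => if s ∈ accepted c then some c else none
        | none => none
    pos := fun s => if (applies s).isSome then st.pos s + 1 else st.pos s }

/-- The immediate acceptance mechanism with affirmative actions (outcome). -/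
def iam (M : Market α β) (rep : α → List β) (useReserve : Bool) : α → Option β :=
  ((iamRound M rep useReserve)^[(univ.sup fun s => (rep s).length) + 1]
    ⟨fun _ => none, fun _ => 0⟩).assign

/-- State of the top trading cycles algorithm. -/
structure TTCState (α β : Type*) where
  remaining : Finset α
  assign : α → Option β

/-- The student a school points to: if the reserve counter is positive and a minority
student remains, its highest-priority remaining minority student; otherwise its
highest-priority remaining student. -/
def schoolPoint (M : Market α β) (useReserve : Bool) (st : TTCState α β) (c : β) :
    Option α :=
  let resLeft := if useReserve then M.reserve c - minCard M st.assign c else 0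
  let mins := st.remaining.filter fun s => M.minority s = true
  if 0 < resLeft ∧ mins.Nonempty then mins.toList.argmin (M.prio c)
  else st.remaining.toList.argmin (M.prio c)

/-- The school a student points to: her most preferred acceptable school with a
remaining seat for her (positive capacity counter and, for a majority student in the
quota version, positive quota counter); `none` means she points to herself. -/
def studentPoint (M : Market α β) (rep : α → List β) (useReserve : Bool)
    (st : TTCState α β) (s : α) : Option β :=
  (rep s).find? fun c =>
    decide (0 < M.cap c - assignedCard st.assign c ∧
      (M.minority s = true ∨ useReserve = true ∨ 0 < M.quota c - majCard M st.assign c))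

/-- The successor map: a student points to a school which points back to a student. -/
def nextMap (M : Market α β) (rep : α → List β) (useReserve : Bool)
    (st : TTCState α β) (s : α) : α :=
  match studentPoint M rep useReserve st s with
  | none => s
  | some c =>
    match schoolPoint M useReserve st c with
    | none => s
    | some t => t

/-- A student lies on a (trading) cycle of the pointing maps. -/
def inCycle (M : Market α β) (rep : α → List β) (useReserve : Bool)
    (st : TTCState α β) (s : α) : Prop :=
  ∃ k ∈ Finset.Icc 1 (Fintype.card α), (nextMap M rep useReserve st)^[k] s = s

/-- One step of the top trading cycles mechanism with affirmative actions: all students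
in cycles are assigned to the school they point to (or to themselves) and removed. -/
def ttcStep (M : Market α β) (rep : α → List β) (useReserve : Bool)
    (st : TTCState α β) : TTCState α β :=
  let cyc := st.remaining.filter fun s => inCycle M rep useReserve st s
  { remaining := st.remaining \ cyc
    assign := fun s =>
      if s ∈ cyc then studentPoint M rep useReserve st s else st.assign s }

/-- The top trading cycles mechanism with affirmative actions: `useReserve = false`
gives the TTCM with majority quotas (TTCM-Q), `useReserve = true` gives the TTCM with
minority reserves (TTCM-R). -/
def ttcm (M : Market α β) (rep : α → List β) (useReserve : Bool) : α → Option β :=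
  ((ttcStep M rep useReserve)^[Fintype.card α] ⟨univ, fun _ => none⟩).assign

/-- Rank of an outcome in a preference list: smaller is better; being unmatched (or
matched to an unlisted school) has rank equal to the length of the list. -/
def rankOf (pref : List β) : Option β → ℕ
  | none => pref.length
  | some c => pref.idxOf c

/-- Student `s` strictly prefers outcome `x` to outcome `y`. -/
def prefStrict (pref : α → List β) (s : α) (x y : Option β) : Prop :=
  rankOf (pref s) x < rankOf (pref s) y

end

end Market

namespace Market

variable {α β : Type*} [Fintype α] [DecidableEq α] [Fintype β] [DecidableEq β]

/-- Student–school pair `(s, c)` blocks matching `μ` under the minority reserve policy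
`r^m = q - q^M`, with respect to the preference profile `pref`. -/
def RBlock (M : Market α β) (pref : α → List β) (μ : α → Option β)
    (s : α) (c : β) : Prop :=
  prefStrict pref s (some c) (μ s) ∧
    (assignedCard μ c < M.cap c ∨
      (M.minority s = true ∧ ∃ s', μ s' = some c ∧ M.prio c s < M.prio c s') ∨
      (M.minority s = false ∧ M.reserve c < minCard M μ c ∧
        ∃ s', μ s' = some c ∧ M.prio c s < M.prio c s') ∨
      (M.minority s = false ∧ minCard M μ c ≤ M.reserve c ∧
        ∃ s', μ s' = some c ∧ M.minority s' = false ∧ M.prio c s < M.prio c s'))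

/-- `μ` is R-stable w.r.t. `pref`: every student weakly prefers her assignment to being
unmatched, and no student–school pair blocks `μ` under the minority reserve policy. -/
def RStable (M : Market α β) (pref : α → List β) (μ : α → Option β) : Prop :=
  (∀ s c, μ s = some c → c ∈ pref s) ∧ ∀ s c, ¬ RBlock M pref μ s c

/-- `μ` respects school capacities. -/
def IsMatching (M : Market α β) (μ : α → Option β) : Prop :=
  ∀ c, assignedCard μ c ≤ M.cap c

/-- `rep` is a Nash equilibrium of the preference revelation game induced by the IAM
(with reserve if `useReserve`, with quota otherwise), evaluated at the true preferences
`truePref`: no student has a report giving her a strictly better assignment. -/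
def NashEq (M : Market α β) (truePref rep : α → List β) (useReserve : Bool) : Prop :=
  ∀ s dev, ¬ prefStrict truePref s
    (iam M (Function.update rep s dev) useReserve s) (iam M rep useReserve s)

end Market


set_option linter.unusedSectionVars false
set_option maxHeartbeats 1000000

namespace Market

noncomputable section
open scoped Classical

section ListAux

lemma nat_eq_of_perm_of_sorted {l₁ l₂ : List ℕ} (hp : l₁.Perm l₂)
    (h1 : l₁.Pairwise (fun a b => a ≤ b)) (h2 : l₂.Pairwise (fun a b => a ≤ b)) : l₁ = l₂ :=
  hp.eq_of_pairwise' h1 h2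

variable {α : Type*} [DecidableEq α]

/-- If a `prio`-sorted list has at least `k` elements of prio `≤ v`, every element of
`l.take k` has prio `≤ v`. -/
lemma take_le_of_countP (prio : α → ℕ) (v : ℕ) :
    ∀ (l : List α) (k : ℕ), l.Pairwise (fun a b => prio a ≤ prio b) →
      k ≤ l.countP (fun a => prio a ≤ v) → ∀ w ∈ l.take k, prio w ≤ v := by
  intro l
  induction l with
  | nil => simp
  | cons a l ih =>
    intro k hp hk w hw
    rcases List.pairwise_cons.1 hp with ⟨ha, hp'⟩
    cases k with
    | zero => simp at hw
    | succ k =>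
      rw [List.take_succ_cons] at hw
      by_cases hav : prio a ≤ v
      · rcases List.mem_cons.1 hw with rfl | hw'
        · exact hav
        · refine ih k hp' ?_ w hw'
          rw [List.countP_cons] at hk
          simp [hav] at hk
          omega
      · exfalso
        have : l.countP (fun a => prio a ≤ v) = 0 := by
          rw [List.countP_eq_zero]
          intro b hb
          simp only [decide_eq_true_eq]
          intro hbv
          exact hav (le_trans (ha b hb) hbv)
        rw [List.countP_cons] at hk
        simp [hav, this] at hk

/-- Filtering a nodup list by membership in a sublist gives back the sublist. -/
lemma filter_mem_of_sublist : ∀ {l m : List α}, m.Sublist l → l.Nodup →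
    l.filter (fun a => a ∈ m) = m := by
  intro l
  induction l with
  | nil => intro m hm _; simpa using (List.sublist_nil.1 hm)
  | cons a l ih =>
    intro m hm hnd
    rcases List.nodup_cons.1 hnd with ⟨hal, hl⟩
    cases hm with
    | cons _ h =>
      have ham : a ∉ m := fun hx => hal (h.subset hx)
      rw [List.filter_cons_of_neg (by simpa using ham)]
      exact ih h hl
    | cons_cons _ h =>
      rename_i m'
      rw [List.filter_cons_of_pos (by simp)]
      have : l.filter (fun x => x ∈ a :: m') = l.filter (fun x => x ∈ m') := by
        apply List.filter_congr
        intro x hx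
        have hxa : x ≠ a := fun hxa => hal (hxa ▸ hx)
        simp [hxa]
      rw [this, ih h hl]

lemma pairwise_take_drop (prio : α → ℕ) {l : List α}
    (hp : l.Pairwise (fun a b => prio a ≤ prio b)) (k : ℕ) :
    ∀ w ∈ l.take k, ∀ u ∈ l.drop k, prio w ≤ prio u := by
  have hp2 : (l.take k ++ l.drop k).Pairwise (fun a b => prio a ≤ prio b) := by
    rw [List.take_append_drop]; exact hp
  exact (List.pairwise_append.1 hp2).2.2

lemma acceptFold_foldl (isMin : α → Bool) :
    ∀ (l : List α) (acc : List α) (k q : ℕ), k ≤ q →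
      (l.foldl (acceptFold isMin) (acc, k, q)).1 = (l.take k).reverse ++ acc := by
  intro l
  induction l with
  | nil => intros; simp
  | cons a l ih =>
    intro acc k q hkq
    cases k with
    | zero =>
      rw [List.foldl_cons]
      have h0 : acceptFold isMin (acc, 0, q) a = (acc, 0, q) := by simp [acceptFold]
      rw [h0]
      simpa using ih acc 0 q (Nat.zero_le q)
    | succ k =>
      rw [List.foldl_cons]
      by_cases hmin : isMin a
      · have h0 : acceptFold isMin (acc, k+1, q) a = (a :: acc, k, q) := by
          simp [acceptFold, hmin]
        rw [h0, ih (a :: acc) k q (by omega)]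
        simp
      · have hq : 0 < q := by omega
        have h0 : acceptFold isMin (acc, k+1, q) a = (a :: acc, k, q - 1) := by
          simp [acceptFold, hmin, hq]
        rw [h0, ih (a :: acc) k (q-1) (by omega)]
        simp

variable (prio : α → ℕ) (isMin : α → Bool)

/-- Applicants in priority order. -/
def sortedApps (apps : List α) : List α := apps.mergeSort (fun a b => prio a ≤ prio b)

/-- Applicants accepted on reserved seats. -/
def resPart (apps : List α) (r : ℕ) : List α :=
  ((sortedApps prio apps).filter fun a => isMin a).take r

/-- The applicants competing for the open seats. -/
def restPart (apps : List α) (r : ℕ) : List α :=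
  (sortedApps prio apps).filter fun a => ¬ a ∈ resPart prio isMin apps r

/-- Applicants accepted on open seats. -/
def foldPart (apps : List α) (cap r : ℕ) : List α :=
  (restPart prio isMin apps r).take (cap - (resPart prio isMin apps r).length)

lemma sortedApps_perm (apps : List α) : (sortedApps prio apps).Perm apps :=
  List.mergeSort_perm apps _

lemma sortedApps_pairwise (apps : List α) :
    (sortedApps prio apps).Pairwise (fun a b => prio a ≤ prio b) := by
  have h := List.pairwise_mergeSort (le := fun a b => decide (prio a ≤ prio b))
    (fun a b c hab hbc => by simp_all; omega)
    (fun a b => by simp [Nat.le_total]) apps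
  exact h.imp (by simp)

lemma sortedApps_nodup {apps : List α} (hnd : apps.Nodup) :
    (sortedApps prio apps).Nodup :=
  ((sortedApps_perm prio apps).nodup_iff).2 hnd

lemma resPart_sublist (apps : List α) (r : ℕ) :
    (resPart prio isMin apps r).Sublist (sortedApps prio apps) :=
  (List.take_sublist _ _).trans (List.filter_sublist)

lemma mem_resPart {apps : List α} {r : ℕ} {u : α} (hu : u ∈ resPart prio isMin apps r) :
    u ∈ apps ∧ isMin u = true := by
  have h1 := List.mem_of_mem_take hu
  rw [List.mem_filter] at h1
  exact ⟨(sortedApps_perm prio apps).subset h1.1, h1.2⟩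

lemma restPart_sublist (apps : List α) (r : ℕ) :
    (restPart prio isMin apps r).Sublist (sortedApps prio apps) :=
  List.filter_sublist

lemma mem_foldPart {apps : List α} {cap r : ℕ} {u : α}
    (hu : u ∈ foldPart prio isMin apps cap r) : u ∈ apps ∧ u ∉ resPart prio isMin apps r := by
  have h1 := List.mem_of_mem_take hu
  simp only [restPart, List.mem_filter] at h1
  refine ⟨(sortedApps_perm prio apps).subset h1.1, by simpa using h1.2⟩

lemma acceptList_eq_parts (apps : List α) (cap q r : ℕ) (hcq : cap ≤ q) :
    acceptList prio isMin apps cap q r =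
      resPart prio isMin apps r ++ (foldPart prio isMin apps cap r).reverse := by
  unfold acceptList foldPart restPart resPart sortedApps
  dsimp only
  rw [acceptFold_foldl isMin _ _ _ _ (le_trans (Nat.sub_le _ _) hcq)]
  simp

lemma filter_mem_resPart {apps : List α} (hnd : apps.Nodup) (r : ℕ) :
    (sortedApps prio apps).filter (fun a => a ∈ resPart prio isMin apps r) =
      resPart prio isMin apps r :=
  filter_mem_of_sublist (resPart_sublist prio isMin apps r) (sortedApps_nodup prio hnd)

lemma restPart_length {apps : List α} (hnd : apps.Nodup) (r : ℕ) :
    (restPart prio isMin apps r).length =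
      apps.length - (resPart prio isMin apps r).length := by
  have hsplit := List.length_eq_countP_add_countP
    (p := fun a => decide (a ∈ resPart prio isMin apps r)) (l := sortedApps prio apps)
  have h1 : (sortedApps prio apps).countP
      (fun a => decide (a ∈ resPart prio isMin apps r)) =
      (resPart prio isMin apps r).length := by
    rw [List.countP_eq_length_filter, filter_mem_resPart prio isMin hnd r]
  have h2 : (sortedApps prio apps).countP
      (fun a => ¬ (decide (a ∈ resPart prio isMin apps r) : Bool)) =
      (restPart prio isMin apps r).length := by
    rw [List.countP_eq_length_filter]
    unfold restPart
    congr 1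
    apply List.filter_congr
    intro x _
    simp
  rw [h1, h2] at hsplit
  have h3 : (sortedApps prio apps).length = apps.length :=
    (sortedApps_perm prio apps).length_eq
  omega

lemma resPart_rest_perm {apps : List α} (hnd : apps.Nodup) (r : ℕ) :
    (resPart prio isMin apps r ++ restPart prio isMin apps r).Perm
      (sortedApps prio apps) := by
  have := List.filter_append_perm
    (p := fun a => decide (a ∈ resPart prio isMin apps r)) (l := sortedApps prio apps)
  rw [filter_mem_resPart prio isMin hnd r] at this
  have h2 : (sortedApps prio apps).filter
      (fun a => !(decide (a ∈ resPart prio isMin apps r) : Bool)) =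
      restPart prio isMin apps r := by
    unfold restPart
    apply List.filter_congr
    intro x _
    simp
  rwa [h2] at this

end ListAux

end

end Market

namespace Market

noncomputable section
open scoped Classical

section ListAux2

variable {α : Type*} [DecidableEq α] (prio : α → ℕ) (isMin : α → Bool)

lemma resPart_length (apps : List α) (r : ℕ) :
    (resPart prio isMin apps r).length =
      min r ((sortedApps prio apps).filter fun a => isMin a).length := by
  unfold resPart
  rw [List.length_take]

lemma resPart_length' (apps : List α) (r : ℕ) :
    (resPart prio isMin apps r).length =
      min r ((apps.filter fun a => isMin a)).length := by
  rw [resPart_length]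
  congr 1
  exact ((sortedApps_perm prio apps).filter _).length_eq

lemma resPart_length_le (apps : List α) (r : ℕ) :
    (resPart prio isMin apps r).length ≤ r := by
  rw [resPart_length]; omega

lemma foldPart_length {apps : List α} (hnd : apps.Nodup) (cap r : ℕ) :
    (foldPart prio isMin apps cap r).length =
      min (cap - (resPart prio isMin apps r).length)
        (apps.length - (resPart prio isMin apps r).length) := by
  unfold foldPart
  rw [List.length_take, restPart_length prio isMin hnd]

lemma resPart_nodup {apps : List α} (hnd : apps.Nodup) (r : ℕ) :
    (resPart prio isMin apps r).Nodup :=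
  (sortedApps_nodup prio hnd).sublist (resPart_sublist prio isMin apps r)

lemma foldPart_nodup {apps : List α} (hnd : apps.Nodup) (cap r : ℕ) :
    (foldPart prio isMin apps cap r).Nodup :=
  ((sortedApps_nodup prio hnd).sublist (restPart_sublist prio isMin apps r)).sublist
    (List.take_sublist _ _)

lemma accept_parts_nodup {apps : List α} (hnd : apps.Nodup) (cap r : ℕ) :
    (resPart prio isMin apps r ++ (foldPart prio isMin apps cap r).reverse).Nodup := by
  rw [List.nodup_append]
  refine ⟨resPart_nodup prio isMin hnd r, by
    simpa using foldPart_nodup prio isMin hnd cap r, ?_⟩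
  intro u hu w hw huw
  rw [List.mem_reverse] at hw
  subst huw
  exact (mem_foldPart prio isMin hw).2 hu

lemma accept_parts_length {apps : List α} (hnd : apps.Nodup) {cap r : ℕ}
    (hr : r ≤ cap) (hcap : cap ≤ apps.length) :
    (resPart prio isMin apps r ++ (foldPart prio isMin apps cap r).reverse).length
      = cap := by
  rw [List.length_append, List.length_reverse, foldPart_length prio isMin hnd]
  have h1 := resPart_length_le prio isMin apps r
  omega

/-- If every applicant fits, every applicant is accepted. -/
lemma accept_all {apps : List α} (hnd : apps.Nodup) {cap r : ℕ}
    (hcap : apps.length ≤ cap) {u : α} (hu : u ∈ apps) :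
    u ∈ resPart prio isMin apps r ∨ u ∈ foldPart prio isMin apps cap r := by
  by_cases hres : u ∈ resPart prio isMin apps r
  · exact Or.inl hres
  · refine Or.inr ?_
    have hrest : u ∈ restPart prio isMin apps r := by
      unfold restPart
      rw [List.mem_filter]
      exact ⟨((sortedApps_perm prio apps).mem_iff).2 hu, by simpa using hres⟩
    have : (restPart prio isMin apps r).length ≤
        cap - (resPart prio isMin apps r).length := by
      rw [restPart_length prio isMin hnd]
      omega
    unfold foldPart
    rwa [List.take_of_length_le this]

/-- `resPart` in canonical form: its image under `prio` depends only on the multiset of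
priorities of minority applicants. -/
lemma resPart_map_prio (apps : List α) (r : ℕ) :
    (resPart prio isMin apps r).map prio =
      (((apps.filter fun a => isMin a).map prio).mergeSort (fun a b => a ≤ b)).take r := by
  unfold resPart
  rw [List.map_take]
  congr 1
  apply nat_eq_of_perm_of_sorted
  · refine List.Perm.trans (List.Perm.map prio ((sortedApps_perm prio apps).filter _)) ?_
    exact (List.mergeSort_perm _ _).symm
  · have hp : ((sortedApps prio apps).filter fun a => isMin a).Pairwise
        (fun a b => prio a ≤ prio b) :=
      (sortedApps_pairwise prio apps).sublist (List.filter_sublist)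
    exact List.pairwise_map.2 hp
  · have h := List.pairwise_mergeSort (le := fun a b : ℕ => decide (a ≤ b))
      (fun a b c hab hbc => by simp_all; omega)
      (fun a b => by simp [Nat.le_total]) ((apps.filter fun a => isMin a).map prio)
    exact h.imp (by simp)

/-- Justified selection on the reserved seats. -/
lemma resPart_le_of_countP {apps : List α} {r v : ℕ}
    (h : r ≤ (apps.filter fun a => isMin a).countP (fun a => prio a ≤ v)) :
    ∀ w ∈ resPart prio isMin apps r, prio w ≤ v := by
  have hperm : ((sortedApps prio apps).filter fun a => isMin a).countP
      (fun a => prio a ≤ v) = (apps.filter fun a => isMin a).countP (fun a => prio a ≤ v) :=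
    ((sortedApps_perm prio apps).filter _).countP_eq _
  intro w hw
  unfold resPart at hw
  exact take_le_of_countP prio v ((sortedApps prio apps).filter fun a => isMin a) r
    ((sortedApps_pairwise prio apps).sublist (List.filter_sublist)) (by omega) w hw

/-- Splitting the priority count between reserved part and the rest. -/
lemma countP_res_add_rest {apps : List α} (hnd : apps.Nodup) (r : ℕ) (p : α → Bool) :
    (resPart prio isMin apps r).countP p + (restPart prio isMin apps r).countP p =
      apps.countP p := by
  have h := (resPart_rest_perm prio isMin hnd r).countP_eq p
  rw [List.countP_append] at h
  rw [h]
  exact (sortedApps_perm prio apps).countP_eq p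

/-- Justified selection on the open seats. -/
lemma foldPart_le_of_countP {apps : List α} (hnd : apps.Nodup) {cap r v : ℕ}
    (h : cap - (resPart prio isMin apps r).length +
      (resPart prio isMin apps r).countP (fun a => prio a ≤ v) ≤
        apps.countP (fun a => prio a ≤ v)) :
    ∀ w ∈ foldPart prio isMin apps cap r, prio w ≤ v := by
  have hsplit := countP_res_add_rest prio isMin hnd r (fun a => decide (prio a ≤ v))
  have hrest : cap - (resPart prio isMin apps r).length ≤
      (restPart prio isMin apps r).countP (fun a => prio a ≤ v) := by omega
  intro w hw
  unfold foldPart at hw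
  exact take_le_of_countP prio v (restPart prio isMin apps r) _
    ((sortedApps_pairwise prio apps).sublist (restPart_sublist prio isMin apps r)) hrest w hw

/-- A minority applicant on an open seat has weakly lower priority than everyone on a
reserved seat. -/
lemma foldPart_min_ge_res {apps : List α} {cap r : ℕ} {u : α}
    (hu : u ∈ foldPart prio isMin apps cap r) (hmin : isMin u = true) :
    ∀ w ∈ resPart prio isMin apps r, prio w ≤ prio u := by
  intro w hw
  have hu' := mem_foldPart prio isMin hu
  have humem : u ∈ (sortedApps prio apps).filter fun a => isMin a := by
    rw [List.mem_filter]
    exact ⟨((sortedApps_perm prio apps).mem_iff).2 hu'.1, hmin⟩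
  set mins := (sortedApps prio apps).filter fun a => isMin a with hm
  have hdrop : u ∈ mins.drop r := by
    have := (List.take_append_drop r mins) ▸ humem
    rcases List.mem_append.1 this with h | h
    · exact absurd h hu'.2
    · exact h
  have hp : mins.Pairwise (fun a b => prio a ≤ prio b) :=
    (sortedApps_pairwise prio apps).sublist (List.filter_sublist)
  exact pairwise_take_drop prio hp r w hw u hdrop

/-- A rejected applicant: everyone on an open seat has weakly lower priority, and the
open seats are exhausted. -/
lemma reject_fold {apps : List α} (hnd : apps.Nodup) {cap r : ℕ} {u : α}
    (hu : u ∈ apps) (hres : u ∉ resPart prio isMin apps r)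
    (hfold : u ∉ foldPart prio isMin apps cap r) :
    (∀ w ∈ foldPart prio isMin apps cap r, prio w ≤ prio u) ∧
      (foldPart prio isMin apps cap r).length = cap - (resPart prio isMin apps r).length := by
  have hrest : u ∈ restPart prio isMin apps r := by
    unfold restPart
    rw [List.mem_filter]
    exact ⟨((sortedApps_perm prio apps).mem_iff).2 hu, by simpa using hres⟩
  set k := cap - (resPart prio isMin apps r).length with hk
  have hdrop : u ∈ (restPart prio isMin apps r).drop k := by
    have := (List.take_append_drop k (restPart prio isMin apps r)) ▸ hrest
    rcases List.mem_append.1 this with h | h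
    · exact absurd h hfold
    · exact h
  have hp : (restPart prio isMin apps r).Pairwise (fun a b => prio a ≤ prio b) :=
    (sortedApps_pairwise prio apps).sublist (restPart_sublist prio isMin apps r)
  constructor
  · intro w hw
    exact pairwise_take_drop prio hp k w hw u hdrop
  · have hlen : k ≤ (restPart prio isMin apps r).length := by
      by_contra hcon
      push_neg at hcon
      rw [List.drop_eq_nil_of_le (le_of_lt hcon)] at hdrop
      simp at hdrop
    unfold foldPart
    rw [List.length_take]
    omega

/-- A rejected minority applicant: the reserved seats are full of weakly higher
priority minorities. -/
lemma reject_res {apps : List α} {r : ℕ} {u : α}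
    (hu : u ∈ apps) (hmin : isMin u = true) (hres : u ∉ resPart prio isMin apps r) :
    (resPart prio isMin apps r).length = r ∧
      ∀ w ∈ resPart prio isMin apps r, prio w ≤ prio u := by
  have humem : u ∈ (sortedApps prio apps).filter fun a => isMin a := by
    rw [List.mem_filter]
    exact ⟨((sortedApps_perm prio apps).mem_iff).2 hu, hmin⟩
  set mins := (sortedApps prio apps).filter fun a => isMin a with hm
  have hdrop : u ∈ mins.drop r := by
    have := (List.take_append_drop r mins) ▸ humem
    rcases List.mem_append.1 this with h | h
    · exact absurd h hres
    · exact h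
  have hp : mins.Pairwise (fun a b => prio a ≤ prio b) :=
    (sortedApps_pairwise prio apps).sublist (List.filter_sublist)
  constructor
  · have hlen : r ≤ mins.length := by
      by_contra hcon
      push_neg at hcon
      rw [List.drop_eq_nil_of_le (le_of_lt hcon)] at hdrop
      simp at hdrop
    rw [resPart_length, ← hm]
    omega
  · intro w hw
    exact pairwise_take_drop prio hp r w hw u hdrop

end ListAux2

end

end Market

namespace Market

noncomputable section
open scoped Classical

section Dyn

variable {α β : Type*} [Fintype α] [DecidableEq α] [Fintype β] [DecidableEq β]
  (M : Market α β)

lemma countP_toList (X : Finset α) (p : α → Bool) :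
    X.toList.countP p = (X.filter fun a => p a = true).card := by
  rw [List.countP_eq_length_filter]
  have hnd : (X.toList.filter p).Nodup := X.nodup_toList.filter _
  rw [← List.toFinset_card_of_nodup hnd, List.toFinset_filter]
  congr 1
  · simp

lemma card_le_countP_toList {X Y : Finset α} {p : α → Bool} (hsub : Y ⊆ X)
    (hY : ∀ u ∈ Y, p u = true) : Y.card ≤ X.toList.countP p := by
  rw [countP_toList]
  exact Finset.card_le_card (fun u hu => Finset.mem_filter.2 ⟨hsub hu, hY u hu⟩)

lemma mergeSort_map_eq_of_perm (prio : α → ℕ) {l₁ l₂ : List α} (h : l₁.Perm l₂) :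
    (l₁.map prio).mergeSort (fun a b => a ≤ b) =
      (l₂.map prio).mergeSort (fun a b => a ≤ b) := by
  apply nat_eq_of_perm_of_sorted
  · exact ((List.mergeSort_perm _ _).trans ((h.map prio))).trans
      (List.mergeSort_perm _ _).symm
  · exact (List.pairwise_mergeSort (le := fun a b : ℕ => decide (a ≤ b))
      (fun a b c hab hbc => by simp_all; omega)
      (fun a b => by simp [Nat.le_total]) (l₁.map prio)).imp (by simp)
  · exact (List.pairwise_mergeSort (le := fun a b : ℕ => decide (a ≤ b))
      (fun a b c hab hbc => by simp_all; omega)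
      (fun a b => by simp [Nat.le_total]) (l₂.map prio)).imp (by simp)

/-- The applicants to school `c` at state `st` under profile `p`. -/
def roundApps (p : α → List β) (st : IAMState α β) (c : β) : Finset α :=
  univ.filter fun t =>
    (if st.assign t = none then (p t)[st.pos t]? else none) = some c

/-- The list of students accepted by school `c` in the round at state `st`
(reserve version). -/
def roundAcc (p : α → List β) (st : IAMState α β) (c : β) : List α :=
  acceptList (M.prio c) M.minority ((roundApps p st c).toList)
    (M.cap c - assignedCard st.assign c) (M.cap c - assignedCard st.assign c)
    (M.reserve c - minCard M st.assign c)

lemma iamRound_assign_some_iff (p : α → List β) (st : IAMState α β) (t : α) (c : β) :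
    (iamRound M p true st).assign t = some c ↔
      st.assign t = some c ∨
        (st.assign t = none ∧ (p t)[st.pos t]? = some c ∧ t ∈ roundAcc M p st c) := by
  unfold iamRound roundAcc roundApps
  cases hst : st.assign t with
  | some e =>
    simp [hst]
  | none =>
    cases hap : (p t)[st.pos t]? with
    | none => simp [hst, hap]
    | some e =>
      simp only [hst, hap]
      by_cases he : e = c
      · subst he
        by_cases hacc : t ∈ acceptList (M.prio e) M.minority
            ((univ.filter fun u =>
              (if st.assign u = none then (p u)[st.pos u]? else none) = some e).toList)
            (M.cap e - assignedCard st.assign e) (M.cap e - assignedCard st.assign e)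
            (M.reserve e - minCard M st.assign e) <;>
          simp [hacc]
      · constructor
        · intro h
          split at h <;> simp_all
        · intro h
          rcases h with h | ⟨-, h, -⟩ <;> simp_all

lemma iamRound_persist (p : α → List β) (useR : Bool) (st : IAMState α β) {t : α} {c : β}
    (h : st.assign t = some c) : (iamRound M p useR st).assign t = some c := by
  unfold iamRound
  simp [h]

lemma iter_persist (p : α → List β) (useR : Bool) (n : ℕ) (st : IAMState α β) {t : α} {c : β}
    (h : st.assign t = some c) :
    ((iamRound M p useR)^[n] st).assign t = some c := by
  induction n generalizing st with
  | zero => exact h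
  | succ n ih =>
    rw [Function.iterate_succ_apply]
    exact ih _ (iamRound_persist M p useR st h)

lemma assignedCard_round_mono (p : α → List β) (useR : Bool) (st : IAMState α β) (c : β) :
    assignedCard st.assign c ≤ assignedCard (iamRound M p useR st).assign c := by
  unfold assignedCard
  apply Finset.card_le_card
  intro t ht
  rw [Finset.mem_filter] at ht ⊢
  exact ⟨ht.1, iamRound_persist M p useR st ht.2⟩

lemma minCard_round_mono (p : α → List β) (useR : Bool) (st : IAMState α β) (c : β) :
    minCard M st.assign c ≤ minCard M (iamRound M p useR st).assign c := by
  unfold minCard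
  apply Finset.card_le_card
  intro t ht
  rw [Finset.mem_filter] at ht ⊢
  exact ⟨ht.1, iamRound_persist M p useR st ht.2.1, ht.2.2⟩

lemma assignedCard_iter_mono (p : α → List β) (useR : Bool) (n : ℕ) (st : IAMState α β)
    (c : β) : assignedCard st.assign c ≤
      assignedCard (((iamRound M p useR)^[n]) st).assign c := by
  induction n generalizing st with
  | zero => exact le_rfl
  | succ n ih =>
    rw [Function.iterate_succ_apply]
    exact le_trans (assignedCard_round_mono M p useR st c) (ih _)

lemma minCard_iter_mono (p : α → List β) (useR : Bool) (n : ℕ) (st : IAMState α β)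
    (c : β) : minCard M st.assign c ≤ minCard M (((iamRound M p useR)^[n]) st).assign c := by
  induction n generalizing st with
  | zero => exact le_rfl
  | succ n ih =>
    rw [Function.iterate_succ_apply]
    exact le_trans (minCard_round_mono M p useR st c) (ih _)

end Dyn

end

end Market

namespace Market

noncomputable section
open scoped Classical

section Dyn2

variable {α β : Type*} [Fintype α] [DecidableEq α] [Fintype β] [DecidableEq β]
  (M : Market α β)

lemma full_round_cases (p : α → List β) (st : IAMState α β) {c : β}
    (hfull : M.cap c ≤ assignedCard st.assign c) {t : α}
    (h : (iamRound M p true st).assign t = some c) :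
    st.assign t = some c ∨
      t ∈ resPart (M.prio c) M.minority ((roundApps p st c).toList)
        (M.reserve c - minCard M st.assign c) := by
  rcases (iamRound_assign_some_iff M p st t c).1 h with h' | ⟨-, -, hacc⟩
  · exact Or.inl h'
  · right
    unfold roundAcc at hacc
    have hcap0 : M.cap c - assignedCard st.assign c = 0 := by omega
    rw [hcap0, acceptList_eq_parts _ _ _ _ _ _ le_rfl] at hacc
    have hnil : foldPart (M.prio c) M.minority ((roundApps p st c).toList) 0
        (M.reserve c - minCard M st.assign c) = [] := by
      apply List.eq_nil_of_length_eq_zero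
      rw [foldPart_length _ _ (roundApps p st c).nodup_toList]
      simp
    rw [hnil] at hacc
    simpa using hacc

lemma full_round_closed (p : α → List β) (st : IAMState α β) {c : β}
    (hfull : M.cap c ≤ assignedCard st.assign c)
    (hres : M.reserve c ≤ minCard M st.assign c) {t : α}
    (h : (iamRound M p true st).assign t = some c) : st.assign t = some c := by
  rcases full_round_cases M p st hfull h with h' | h2
  · exact h'
  · exfalso
    have h0 : M.reserve c - minCard M st.assign c = 0 := by omega
    rw [h0] at h2
    unfold resPart at h2
    simp at h2

lemma full_round_minority (p : α → List β) (st : IAMState α β) {c : β}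
    (hfull : M.cap c ≤ assignedCard st.assign c) {t : α}
    (h : (iamRound M p true st).assign t = some c) :
    st.assign t = some c ∨ M.minority t = true := by
  rcases full_round_cases M p st hfull h with h' | h2
  · exact Or.inl h'
  · exact Or.inr (mem_resPart _ _ h2).2

lemma full_iter_closed (p : α → List β) {c : β} (n : ℕ) :
    ∀ st : IAMState α β, M.cap c ≤ assignedCard st.assign c →
      M.reserve c ≤ minCard M st.assign c → ∀ t : α,
      ((iamRound M p true)^[n] st).assign t = some c → st.assign t = some c := by
  induction n with
  | zero => intro st _ _ t h; exact h
  | succ n ih =>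
    intro st hfull hres t h
    rw [Function.iterate_succ_apply] at h
    have h1 := ih (iamRound M p true st)
      (le_trans hfull (assignedCard_round_mono M p true st c))
      (le_trans hres (minCard_round_mono M p true st c)) t h
    exact full_round_closed M p st hfull hres h1

lemma full_iter_minority (p : α → List β) {c : β} (n : ℕ) :
    ∀ st : IAMState α β, M.cap c ≤ assignedCard st.assign c → ∀ t : α,
      ((iamRound M p true)^[n] st).assign t = some c →
      st.assign t = some c ∨ M.minority t = true := by
  induction n with
  | zero => intro st _ t h; exact Or.inl h
  | succ n ih =>
    intro st hfull t h
    rw [Function.iterate_succ_apply] at h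
    rcases ih (iamRound M p true st)
      (le_trans hfull (assignedCard_round_mono M p true st c)) t h with h1 | h1
    · exact full_round_minority M p st hfull h1
    · exact Or.inr h1

lemma full_round_minCard (p : α → List β) (st : IAMState α β) {c : β}
    (hfull : M.cap c ≤ assignedCard st.assign c) :
    minCard M (iamRound M p true st).assign c ≤
      max (M.reserve c) (minCard M st.assign c) := by
  have hsub : (univ.filter fun t =>
      (iamRound M p true st).assign t = some c ∧ M.minority t = true) ⊆
      (univ.filter fun t => st.assign t = some c ∧ M.minority t = true) ∪
      (resPart (M.prio c) M.minority ((roundApps p st c).toList)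
        (M.reserve c - minCard M st.assign c)).toFinset := by
    intro t ht
    rw [Finset.mem_filter] at ht
    rcases full_round_cases M p st hfull ht.2.1 with h | h
    · exact Finset.mem_union_left _ (Finset.mem_filter.2 ⟨Finset.mem_univ t, h, ht.2.2⟩)
    · exact Finset.mem_union_right _ (List.mem_toFinset.2 h)
  have h1 : minCard M (iamRound M p true st).assign c ≤
      minCard M st.assign c + (M.reserve c - minCard M st.assign c) := by
    calc minCard M (iamRound M p true st).assign c
        ≤ ((univ.filter fun t => st.assign t = some c ∧ M.minority t = true) ∪
            (resPart (M.prio c) M.minority ((roundApps p st c).toList)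
              (M.reserve c - minCard M st.assign c)).toFinset).card :=
          Finset.card_le_card hsub
      _ ≤ minCard M st.assign c + (M.reserve c - minCard M st.assign c) := by
          refine le_trans (Finset.card_union_le _ _) ?_
          refine Nat.add_le_add le_rfl ?_
          refine le_trans (List.toFinset_card_le _) ?_
          exact resPart_length_le _ _ _ _
  omega

lemma full_iter_minCard (p : α → List β) {c : β} (n : ℕ) :
    ∀ st : IAMState α β, M.cap c ≤ assignedCard st.assign c →
      minCard M (((iamRound M p true)^[n]) st).assign c ≤
        max (M.reserve c) (minCard M st.assign c) := by
  induction n with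
  | zero => intro st _; exact le_max_right _ _
  | succ n ih =>
    intro st hfull
    rw [Function.iterate_succ_apply]
    refine le_trans (ih (iamRound M p true st)
      (le_trans hfull (assignedCard_round_mono M p true st c))) ?_
    have := full_round_minCard M p st hfull
    have h2 : max (M.reserve c) (minCard M (iamRound M p true st).assign c) ≤
        max (M.reserve c) (max (M.reserve c) (minCard M st.assign c)) :=
      max_le (le_max_left _ _) (le_max_of_le_right this)
    rwa [← max_assoc, max_self] at h2

lemma assignedCard_none (c : β) :
    assignedCard (fun _ : α => (none : Option β)) c = 0 := by
  simp [assignedCard]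

lemma minCard_none (c : β) : minCard M (fun _ : α => (none : Option β)) c = 0 := by
  simp [minCard]

/-- The applicants to school `c` in the first round. -/
def firstApps (p : α → List β) (c : β) : Finset α :=
  univ.filter fun t => (p t)[0]? = some c

/-- The students accepted by school `c` in the first round. -/
def firstAcc (p : α → List β) (c : β) : List α :=
  acceptList (M.prio c) M.minority ((firstApps p c).toList) (M.cap c) (M.cap c)
    (M.reserve c)

lemma roundApps_st0 (p : α → List β) (c : β) :
    roundApps p (⟨fun _ => none, fun _ => 0⟩ : IAMState α β) c = firstApps p c := by
  unfold roundApps firstApps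
  simp

lemma roundAcc_st0 (p : α → List β) (c : β) :
    roundAcc M p (⟨fun _ => none, fun _ => 0⟩ : IAMState α β) c = firstAcc M p c := by
  unfold roundAcc firstAcc
  rw [roundApps_st0]
  have h1 : assignedCard (⟨fun _ => none, fun _ => 0⟩ : IAMState α β).assign c = 0 :=
    assignedCard_none c
  have h2 : minCard M (⟨fun _ => none, fun _ => 0⟩ : IAMState α β).assign c = 0 :=
    minCard_none M c
  rw [h1, h2]
  simp

lemma st1_assign_iff (p : α → List β) (t : α) (c : β) :
    (iamRound M p true (⟨fun _ => none, fun _ => 0⟩ : IAMState α β)).assign t = some c ↔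
      ((p t)[0]? = some c ∧ t ∈ firstAcc M p c) := by
  rw [iamRound_assign_some_iff, roundAcc_st0]
  simp

lemma mem_firstAcc_apps {p : α → List β} {c : β} {t : α} (h : t ∈ firstAcc M p c) :
    t ∈ firstApps p c := by
  unfold firstAcc at h
  rw [acceptList_eq_parts _ _ _ _ _ _ le_rfl] at h
  rcases List.mem_append.1 h with h | h
  · exact Finset.mem_toList.1 (mem_resPart _ _ h).1
  · rw [List.mem_reverse] at h
    exact Finset.mem_toList.1 (mem_foldPart _ _ h).1

lemma firstAcc_nodup (p : α → List β) (c : β) : (firstAcc M p c).Nodup := by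
  unfold firstAcc
  rw [acceptList_eq_parts _ _ _ _ _ _ le_rfl]
  exact accept_parts_nodup _ _ (firstApps p c).nodup_toList _ _

lemma st1_filter_eq (p : α → List β) (c : β) :
    (univ.filter fun t =>
      (iamRound M p true (⟨fun _ => none, fun _ => 0⟩ : IAMState α β)).assign t = some c)
      = (firstAcc M p c).toFinset := by
  ext t
  simp only [Finset.mem_filter, Finset.mem_univ, true_and, List.mem_toFinset,
    st1_assign_iff]
  constructor
  · rintro ⟨-, h⟩; exact h
  · intro h
    have := mem_firstAcc_apps M h
    unfold firstApps at this
    rw [Finset.mem_filter] at this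
    exact ⟨this.2, h⟩

lemma assignedCard_st1 (p : α → List β) (c : β) :
    assignedCard
      (iamRound M p true (⟨fun _ => none, fun _ => 0⟩ : IAMState α β)).assign c =
      (firstAcc M p c).length := by
  unfold assignedCard
  rw [st1_filter_eq, List.toFinset_card_of_nodup (firstAcc_nodup M p c)]

lemma minCard_st1 (p : α → List β) (c : β) :
    minCard M (iamRound M p true (⟨fun _ => none, fun _ => 0⟩ : IAMState α β)).assign c =
      (firstAcc M p c).countP (fun a => M.minority a) := by
  unfold minCard
  have hset : (univ.filter fun t =>
      (iamRound M p true (⟨fun _ => none, fun _ => 0⟩ : IAMState α β)).assign t = some c ∧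
        M.minority t = true)
      = ((firstAcc M p c).filter (fun a => M.minority a)).toFinset := by
    ext t
    simp only [Finset.mem_filter, Finset.mem_univ, true_and, List.mem_toFinset,
      List.mem_filter, st1_assign_iff]
    constructor
    · rintro ⟨⟨-, h⟩, hm⟩; exact ⟨h, hm⟩
    · intro ⟨h, hm⟩
      have := mem_firstAcc_apps M h
      unfold firstApps at this
      rw [Finset.mem_filter] at this
      exact ⟨⟨this.2, h⟩, hm⟩
  rw [hset, List.toFinset_card_of_nodup ((firstAcc_nodup M p c).filter _),
    List.countP_eq_length_filter]

lemma iam_eq_iter (p : α → List β) :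
    iam M p true = ((iamRound M p true)^[univ.sup fun s => (p s).length]
      (iamRound M p true (⟨fun _ => none, fun _ => 0⟩ : IAMState α β))).assign := by
  rw [iam, Function.iterate_succ_apply]

lemma iam_some_of_first {p : α → List β} {t : α} {c : β}
    (h : (iamRound M p true (⟨fun _ => none, fun _ => 0⟩ : IAMState α β)).assign t
      = some c) : iam M p true t = some c := by
  rw [iam_eq_iter]
  exact iter_persist M p true _ _ h

end Dyn2

end

end Market

open Market in
/-- If the IAM-R outcome of a stated profile `rep` is not R-stable with respect to the
true preferences, then `rep` is not a Nash equilibrium: a student in some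
true-preference blocking pair `(s, c)` can profitably deviate by reporting a
preference listing `c` first. -/
theorem iamR_unstable_not_nash {α β : Type*} [Fintype α] [DecidableEq α] [Fintype β]
    [DecidableEq β] (M : Market α β) (truePref rep : α → List β)
    (htrue : ∀ s c, c ∈ truePref s)
    (hq : ∀ c, M.quota c ≤ M.cap c)
    (hns : ¬ RStable M truePref (iam M rep true)) :
    (∃ (s : α) (c : β) (dev : List β),
      RBlock M truePref (iam M rep true) s c ∧ dev.head? = some c ∧
        prefStrict truePref s (iam M (Function.update rep s dev) true s)
          (iam M rep true s)) ∧
      ¬ NashEq M truePref rep true := by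
  classical
  obtain ⟨s, c, hblk⟩ : ∃ s c, RBlock M truePref (iam M rep true) s c := by
    by_contra hcon
    push_neg at hcon
    exact hns ⟨fun s c _ => htrue s c, fun s c => hcon s c⟩
  have key : prefStrict truePref s (iam M (Function.update rep s [c]) true s)
      (iam M rep true s) := by
    have hdev : iam M (Function.update rep s [c]) true s = some c := by
      set rep' := Function.update rep s [c] with hrep'
      have hs0 : (rep' s)[0]? = some c := by
        rw [hrep', Function.update_self]
        rfl
      suffices hmem : s ∈ firstAcc M rep' c by
        exact iam_some_of_first M ((st1_assign_iff M rep' s c).2 ⟨hs0, hmem⟩)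
      by_contra hrej
      set v := M.prio c s with hv
      have hr : M.reserve c ≤ M.cap c := Nat.sub_le _ _
      set A := firstApps rep c with hAdef
      set A' := firstApps rep' c with hA'def
      set B := A.erase s with hBdef
      have hsB : s ∉ B := Finset.notMem_erase _ _
      have hBsub : B ⊆ A := Finset.erase_subset _ _
      have hA' : A' = insert s B := by
        ext t
        by_cases ht : t = s
        · subst ht
          simp [hA'def, firstApps, hrep', Function.update_self]
        · simp only [firstApps, Finset.mem_filter, Finset.mem_univ, true_and,
            Finset.mem_insert, hBdef, hAdef, hA'def, Finset.mem_erase, hrep',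
            Function.update_of_ne ht]
          simp [ht]
      have hA'e : A'.erase s = B := by rw [hA']; exact Finset.erase_insert hsB
      have hsA' : s ∈ A' := by rw [hA']; exact Finset.mem_insert_self _ _
      have hndA' : A'.toList.Nodup := A'.nodup_toList
      have hndA : A.toList.Nodup := A.nodup_toList
      have hsmem' : s ∈ A'.toList := Finset.mem_toList.2 hsA'
      set res' := resPart (M.prio c) M.minority A'.toList (M.reserve c) with hres'def
      set fold' := foldPart (M.prio c) M.minority A'.toList (M.cap c) (M.reserve c)
        with hfold'def
      have hL' : firstAcc M rep' c = res' ++ fold'.reverse := by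
        unfold firstAcc; exact acceptList_eq_parts _ _ _ _ _ _ le_rfl
      have hs1 : s ∉ res' := fun h => hrej (by
        rw [hL']; exact List.mem_append_left _ h)
      have hs2 : s ∉ fold' := fun h => hrej (by
        rw [hL']; exact List.mem_append_right _ (List.mem_reverse.2 h))
      have hcapA' : M.cap c < A'.card := by
        by_contra hle
        push_neg at hle
        have hlen : A'.toList.length ≤ M.cap c := by
          rw [Finset.length_toList]; exact hle
        rcases accept_all (M.prio c) M.minority (cap := M.cap c) (r := M.reserve c)
          hndA' hlen hsmem' with h | h
        · exact hs1 h
        · exact hs2 h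
      obtain ⟨hfold'le, hfold'len⟩ :=
        reject_fold (M.prio c) M.minority hndA' hsmem' hs1 hs2
      have hL'len : (firstAcc M rep' c).length = M.cap c := by
        rw [hL']
        exact accept_parts_length (M.prio c) M.minority hndA' hr
          (by rw [Finset.length_toList]; omega)
      have hres'B : ∀ u ∈ res', u ∈ B := by
        intro u hu
        have h1 := (mem_resPart _ _ hu).1
        have hus : u ≠ s := fun h => hs1 (h ▸ hu)
        rw [← hA'e]
        exact Finset.mem_erase.2 ⟨hus, Finset.mem_toList.1 h1⟩
      have hfold'B : ∀ u ∈ fold', u ∈ B := by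
        intro u hu
        have h1 := (mem_foldPart _ _ hu).1
        have hus : u ≠ s := fun h => hs2 (h ▸ hu)
        rw [← hA'e]
        exact Finset.mem_erase.2 ⟨hus, Finset.mem_toList.1 h1⟩
      have hL'B : ∀ u ∈ firstAcc M rep' c, u ∈ B := by
        intro u hu
        rw [hL'] at hu
        rcases List.mem_append.1 hu with h | h
        · exact hres'B u h
        · exact hfold'B u (List.mem_reverse.1 h)
      have hBcard : M.cap c ≤ B.card := by
        have hsub : (firstAcc M rep' c).toFinset ⊆ B := fun u hu =>
          hL'B u (List.mem_toFinset.1 hu)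
        have h2 := Finset.card_le_card hsub
        rwa [List.toFinset_card_of_nodup (firstAcc_nodup M rep' c), hL'len] at h2
      have hAcard : M.cap c ≤ A.card := le_trans hBcard (Finset.card_le_card hBsub)
      have hAlen : M.cap c ≤ A.toList.length := by
        rw [Finset.length_toList]; exact hAcard
      set res := resPart (M.prio c) M.minority A.toList (M.reserve c) with hresdef
      set fold := foldPart (M.prio c) M.minority A.toList (M.cap c) (M.reserve c)
        with hfolddef
      have hL : firstAcc M rep c = res ++ fold.reverse := by
        unfold firstAcc; exact acceptList_eq_parts _ _ _ _ _ _ le_rfl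
      have hLlen : (firstAcc M rep c).length = M.cap c := by
        rw [hL]
        exact accept_parts_length (M.prio c) M.minority hndA hr hAlen
      have Hfull : M.cap c ≤ assignedCard
          (iamRound M rep true (⟨fun _ => none, fun _ => 0⟩ : IAMState α β)).assign c := by
        rw [assignedCard_st1, hLlen]
      have hμfull : M.cap c ≤ assignedCard (iam M rep true) c := by
        rw [iam_eq_iter]
        exact le_trans Hfull (assignedCard_iter_mono M rep true _ _ c)
      -- facts available when `s` is a majority student
      have majFacts : M.minority s = false → ∀ w ∈ fold, M.prio c w ≤ v := by
        intro hsmaj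
        have hfilterfin : A.filter (fun a => M.minority a = true) =
            A'.filter (fun a => M.minority a = true) := by
          ext t
          simp only [Finset.mem_filter]
          constructor
          · rintro ⟨htA, htm⟩
            have hts : t ≠ s := by rintro rfl; rw [hsmaj] at htm; simp at htm
            refine ⟨?_, htm⟩
            rw [hA']
            exact Finset.mem_insert_of_mem (Finset.mem_erase.2 ⟨hts, htA⟩)
          · rintro ⟨htA', htm⟩
            have hts : t ≠ s := by rintro rfl; rw [hsmaj] at htm; simp at htm
            rw [hA'] at htA'
            rcases Finset.mem_insert.1 htA' with h | h
            · exact absurd h hts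
            · exact ⟨hBsub h, htm⟩
        have hfilperm : (A.toList.filter fun a => M.minority a).Perm
            (A'.toList.filter fun a => M.minority a) := by
          apply List.perm_of_nodup_nodup_toFinset_eq (hndA.filter _) (hndA'.filter _)
          rw [List.toFinset_filter, List.toFinset_filter, Finset.toList_toFinset,
            Finset.toList_toFinset, hfilterfin]
        have hmapres : res.map (M.prio c) = res'.map (M.prio c) := by
          rw [hresdef, hres'def, resPart_map_prio, resPart_map_prio,
            mergeSort_map_eq_of_perm (M.prio c) hfilperm]
        have hreslen : res.length = res'.length := by
          have h1 := congrArg List.length hmapres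
          simpa using h1
        have hrescnt : res.countP (fun a => M.prio c a ≤ v) =
            res'.countP (fun a => M.prio c a ≤ v) := by
          have h1 := List.countP_map (p := fun n => decide (n ≤ v)) (f := M.prio c) (l := res)
          rw [hmapres] at h1
          have h2 := List.countP_map (p := fun n => decide (n ≤ v)) (f := M.prio c) (l := res')
          exact h1.symm.trans h2
        have hY : ((firstAcc M rep' c).filter (fun a => M.prio c a ≤ v)).toFinset.card =
            res'.countP (fun a => M.prio c a ≤ v) + (M.cap c - res'.length) := by
          rw [List.toFinset_card_of_nodup ((firstAcc_nodup M rep' c).filter _),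
            ← List.countP_eq_length_filter, hL', List.countP_append,
            List.countP_reverse]
          have hf : fold'.countP (fun a => M.prio c a ≤ v) = fold'.length :=
            List.countP_eq_length.2 (fun a ha => by simpa using hfold'le a ha)
          rw [hf, hfold'len]
        have hle := card_le_countP_toList (X := A)
          (Y := ((firstAcc M rep' c).filter (fun a => M.prio c a ≤ v)).toFinset)
          (p := fun a => decide (M.prio c a ≤ v))
          (fun u hu => by
            rw [List.mem_toFinset, List.mem_filter] at hu
            exact hBsub (hL'B u hu.1))
          (fun u hu => by
            rw [List.mem_toFinset, List.mem_filter] at hu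
            exact hu.2)
        rw [hY] at hle
        refine foldPart_le_of_countP _ _ hndA ?_
        rw [← hresdef]
        have heq : M.cap c - res.length + res.countP (fun a => M.prio c a ≤ v) =
            res'.countP (fun a => M.prio c a ≤ v) + (M.cap c - res'.length) := by
          rw [hreslen, hrescnt]; omega
        omega
      -- facts available when `s` is a minority student
      have minFacts : M.minority s = true →
          (∀ u ∈ firstAcc M rep c, M.prio c u ≤ v) ∧
            M.reserve c ≤ (firstAcc M rep c).countP (fun a => M.minority a) := by
        intro hsmin
        obtain ⟨hres'len, hres'le⟩ :=
          reject_res (M.prio c) M.minority hsmem' hsmin hs1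
        have hres'nd : res'.Nodup := resPart_nodup _ _ hndA' _
        have hi1 : M.reserve c ≤
            (A.toList.filter fun a => M.minority a).countP
              (fun a => M.prio c a ≤ v) := by
          rw [List.countP_filter]
          refine le_trans ?_ (card_le_countP_toList (X := A) (Y := res'.toFinset)
            (fun u hu => hBsub (hres'B u (List.mem_toFinset.1 hu)))
            (fun u hu => ?_))
          · rw [List.toFinset_card_of_nodup hres'nd, hres'len]
          · rw [List.mem_toFinset] at hu
            have h1 := hres'le u hu
            have h2 := (mem_resPart _ _ hu).2
            simp [h1, h2, hv]
        have hi2 : M.cap c ≤ A.toList.countP (fun a => M.prio c a ≤ v) := by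
          refine le_trans ?_ (card_le_countP_toList (X := A)
            (Y := (firstAcc M rep' c).toFinset)
            (fun u hu => hBsub (hL'B u (List.mem_toFinset.1 hu)))
            (fun u hu => ?_))
          · rw [List.toFinset_card_of_nodup (firstAcc_nodup M rep' c), hL'len]
          · rw [List.mem_toFinset, hL'] at hu
            rcases List.mem_append.1 hu with h | h
            · simpa using hres'le u h
            · simpa using hfold'le u (List.mem_reverse.1 h)
        have hresle : ∀ w ∈ res, M.prio c w ≤ v := by
          rw [hresdef]
          exact resPart_le_of_countP _ _ hi1
        have hfoldle : ∀ w ∈ fold, M.prio c w ≤ v := by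
          rw [hfolddef]
          refine foldPart_le_of_countP _ _ hndA ?_
          rw [← hresdef]
          have hc1 : res.countP (fun a => M.prio c a ≤ v) ≤ res.length :=
            List.countP_le_length
          have hc2 : res.length ≤ M.reserve c := by
            rw [hresdef]; exact resPart_length_le _ _ _ _
          omega
        refine ⟨?_, ?_⟩
        · intro u hu
          rw [hL] at hu
          rcases List.mem_append.1 hu with h | h
          · exact hresle u h
          · exact hfoldle u (List.mem_reverse.1 h)
        · have hminsA : M.reserve c ≤ (A.toList.filter fun a => M.minority a).length :=
            le_trans hi1 (List.countP_le_length)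
          have hreslenr : res.length = M.reserve c := by
            rw [hresdef, resPart_length']
            omega
          have hresm : res.countP (fun a => M.minority a) = res.length :=
            List.countP_eq_length.2 (fun a ha => (mem_resPart _ _ ha).2)
          rw [hL, List.countP_append]
          omega
      -- discharge the four blocking possibilities
      rcases hblk.2 with hcase | ⟨hsmin, s', hs'c, hs'p⟩ |
        ⟨hsmaj, hminμ, s', hs'c, hs'p⟩ | ⟨hsmaj, hmincond, s', hs'c, hs'maj, hs'p⟩
      · omega
      · -- minority blocking via priority
        obtain ⟨hLle, hminL⟩ := minFacts hsmin
        have Hres : M.reserve c ≤ minCard M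
            (iamRound M rep true (⟨fun _ => none, fun _ => 0⟩ : IAMState α β)).assign c := by
          rw [minCard_st1]; exact hminL
        have hs'L : s' ∈ firstAcc M rep c := by
          have h := hs'c
          rw [iam_eq_iter] at h
          have h2 := full_iter_closed M rep _ _ Hfull Hres s' h
          exact ((st1_assign_iff M rep s' c).1 h2).2
        have := hLle s' hs'L
        omega
      · -- majority blocking, reserve exceeded
        have hfoldle := majFacts hsmaj
        have hminbound : minCard M (iam M rep true) c ≤
            max (M.reserve c) (minCard M
              (iamRound M rep true (⟨fun _ => none, fun _ => 0⟩ : IAMState α β)).assign c) := by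
          rw [iam_eq_iter]
          exact full_iter_minCard M rep _ _ Hfull
        have hminst1 : M.reserve c < minCard M
            (iamRound M rep true (⟨fun _ => none, fun _ => 0⟩ : IAMState α β)).assign c := by
          by_contra hcon
          push_neg at hcon
          rw [max_eq_left hcon] at hminbound
          omega
        have Hres : M.reserve c ≤ minCard M
            (iamRound M rep true (⟨fun _ => none, fun _ => 0⟩ : IAMState α β)).assign c :=
          le_of_lt hminst1
        rw [minCard_st1] at hminst1
        have hfoldmin : 0 < fold.countP (fun a => M.minority a) := by
          rw [hL, List.countP_append, List.countP_reverse] at hminst1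
          have h1 : res.countP (fun a => M.minority a) ≤ M.reserve c := by
            refine le_trans (List.countP_le_length) ?_
            rw [hresdef]; exact resPart_length_le _ _ _ _
          omega
        obtain ⟨u, hufold, humin⟩ := List.countP_pos_iff.1 hfoldmin
        have hresle : ∀ w ∈ res, M.prio c w ≤ v := fun w hw =>
          le_trans (foldPart_min_ge_res _ _ hufold (by simpa using humin) w hw)
            (hfoldle u hufold)
        have hLle : ∀ w ∈ firstAcc M rep c, M.prio c w ≤ v := by
          intro w hw
          rw [hL] at hw
          rcases List.mem_append.1 hw with h | h
          · exact hresle w h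
          · exact hfoldle w (List.mem_reverse.1 h)
        have hs'L : s' ∈ firstAcc M rep c := by
          have h := hs'c
          rw [iam_eq_iter] at h
          have h2 := full_iter_closed M rep _ _ Hfull Hres s' h
          exact ((st1_assign_iff M rep s' c).1 h2).2
        have := hLle s' hs'L
        omega
      · -- majority blocking within the majority quota
        have hfoldle := majFacts hsmaj
        have hs'cases : (iamRound M rep true
            (⟨fun _ => none, fun _ => 0⟩ : IAMState α β)).assign s' = some c ∨
            M.minority s' = true := by
          have h := hs'c
          rw [iam_eq_iter] at h
          exact full_iter_minority M rep _ _ Hfull s' h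
        rcases hs'cases with h | h
        · have hs'L := ((st1_assign_iff M rep s' c).1 h).2
          rw [hL] at hs'L
          rcases List.mem_append.1 hs'L with hh | hh
          · have hmm := (mem_resPart _ _ hh).2
            rw [hs'maj] at hmm
            simp at hmm
          · have := hfoldle s' (List.mem_reverse.1 hh)
            omega
        · rw [hs'maj] at h
          simp at h
    rw [hdev]
    exact hblk.1
  exact ⟨⟨s, c, [c], hblk, rfl, key⟩, fun hN => hN s [c] key⟩
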